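/- For every real z with |z| < 1: ₂F₁(−1/2, 3/4; −1/4; z) = (1+z)·(1−z)^{−1/2}; that is, Σ_{n=0}^∞ ((−1/2)_n · (3/4)_n / ((−1/4)_n · n!)) · z^n = (1+z)/√(1−z). (Note that (−1/4)_n ≠ 0 for every n ≥ 0 since −1/4 is not a nonpositive integer.) -/

import Mathlib

open Finset Filter

/-- The Gauss hypergeometric series `₂F₁(a,b;c;z) = Σ_n (a)_n (b)_n / ((c)_n n!) · zⁿ`,
where `(a)_n` is the rising factorial (Pochhammer symbol). -/
noncomputable def hyp2F1 (a b c z : ℝ) : ℝ :=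
  ∑' n : ℕ, ((ascPochhammer ℝ n).eval a * (ascPochhammer ℝ n).eval b /
      ((ascPochhammer ℝ n).eval c * (n.factorial : ℝ))) * z ^ n

/-- Coefficients of the binomial series for `(1-z)^{-1/2}`. -/
noncomputable def cc (n : ℕ) : ℝ := (ascPochhammer ℝ n).eval (1/2) / n.factorial

lemma asc_succ_left_eval (n : ℕ) (x : ℝ) :
    (ascPochhammer ℝ (n+1)).eval x = x * (ascPochhammer ℝ n).eval (x + 1) := by
  rw [ascPochhammer_succ_left]
  simp [Polynomial.eval_mul, Polynomial.eval_comp]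

lemma asc_pos_half (n : ℕ) : 0 < (ascPochhammer ℝ n).eval (1/2) :=
  ascPochhammer_pos n _ (by norm_num)

lemma cc_zero : cc 0 = 1 := by simp [cc]

lemma cc_succ (n : ℕ) : cc (n+1) = cc n * ((n + 1/2) / (n + 1)) := by
  have h := ascPochhammer_succ_eval n (1/2 : ℝ)
  simp only [cc, h, Nat.factorial_succ, Nat.cast_mul]
  field_simp
  push_cast
  ring

lemma cc_pos (n : ℕ) : 0 < cc n :=
  div_pos (asc_pos_half n) (by exact_mod_cast Nat.factorial_pos n)

lemma cc_le_one (n : ℕ) : cc n ≤ 1 := by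
  induction n with
  | zero => simp [cc_zero]
  | succ n ih =>
    rw [cc_succ]
    have h1 : ((n : ℝ) + 1/2) / (n + 1) ≤ 1 := by
      rw [div_le_one (by positivity)]; linarith
    calc cc n * ((n + 1/2) / (n + 1)) ≤ 1 * 1 :=
          mul_le_mul ih h1 (by positivity) one_pos.le
      _ = 1 := by ring

lemma cc_antitone (n : ℕ) : cc (n+1) ≤ cc n := by
  rw [cc_succ]
  have h1 : ((n : ℝ) + 1/2) / (n + 1) ≤ 1 := by
    rw [div_le_one (by positivity)]; linarith
  calc cc n * ((n + 1/2) / (n + 1)) ≤ cc n * 1 :=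
        mul_le_mul_of_nonneg_left h1 (cc_pos n).le
    _ = cc n := mul_one _

/-- Vandermonde convolution for rising factorials over ℝ. -/
lemma asc_vandermonde (x y : ℝ) (n : ℕ) :
    ∑ ij ∈ antidiagonal n, (n.choose ij.1 : ℝ) *
      ((ascPochhammer ℝ ij.1).eval x * (ascPochhammer ℝ ij.2).eval y)
      = (ascPochhammer ℝ n).eval (x + y) := by
  induction n with
  | zero => simp
  | succ n ih =>
    rw [sum_antidiagonal_choose_succ_mul
      (fun i j => (ascPochhammer ℝ i).eval x * (ascPochhammer ℝ j).eval y) n]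
    have h1 : ∀ ij ∈ antidiagonal n,
        (n.choose ij.1 : ℝ) * ((ascPochhammer ℝ ij.1).eval x *
          (ascPochhammer ℝ (ij.2+1)).eval y)
        + (n.choose ij.2 : ℝ) * ((ascPochhammer ℝ (ij.1+1)).eval x *
          (ascPochhammer ℝ ij.2).eval y)
        = ((n.choose ij.1 : ℝ) * ((ascPochhammer ℝ ij.1).eval x *
            (ascPochhammer ℝ ij.2).eval y)) * (x + y + n) := by
      intro ij hij
      have hmem : ij.1 + ij.2 = n := mem_antidiagonal.mp hij
      have hch : (n.choose ij.2 : ℝ) = (n.choose ij.1 : ℝ) := by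
        have h : n.choose ij.2 = n.choose ij.1 :=
          Nat.choose_symm_of_eq_add (by omega)
        exact_mod_cast h
      rw [ascPochhammer_succ_eval, ascPochhammer_succ_eval, hch]
      have : (x + y + (n : ℝ)) = (y + ij.2) + (x + ij.1) := by
        rw [← hmem]; push_cast; ring
      rw [this]; ring
    rw [← sum_add_distrib, sum_congr rfl h1, ← sum_mul, ih,
      ascPochhammer_succ_eval]

lemma cc_conv (n : ℕ) : ∑ ij ∈ antidiagonal n, cc ij.1 * cc ij.2 = 1 := by
  have key := asc_vandermonde (1/2) (1/2) n
  norm_num at key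
  have h : ∀ ij ∈ antidiagonal n, cc ij.1 * cc ij.2
      = ((n.choose ij.1 : ℝ) * ((ascPochhammer ℝ ij.1).eval (1/2) *
          (ascPochhammer ℝ ij.2).eval (1/2))) / n.factorial := by
    intro ij hij
    have hmem : ij.1 + ij.2 = n := mem_antidiagonal.mp hij
    have hfac : (n.choose ij.1) * (ij.1.factorial * ij.2.factorial) = n.factorial := by
      have h := Nat.choose_mul_factorial_mul_factorial (show ij.1 ≤ n by omega)
      rw [show n - ij.1 = ij.2 by omega] at h
      rw [← h]; ring
    have hfacR : (n.choose ij.1 : ℝ) * (ij.1.factorial * ij.2.factorial) = n.factorial := by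
      exact_mod_cast hfac
    have h1 : (ij.1.factorial : ℝ) ≠ 0 := by exact_mod_cast (Nat.factorial_pos _).ne'
    have h2 : (ij.2.factorial : ℝ) ≠ 0 := by exact_mod_cast (Nat.factorial_pos _).ne'
    have h3 : (n.factorial : ℝ) ≠ 0 := by exact_mod_cast (Nat.factorial_pos _).ne'
    rw [cc, cc, div_mul_div_comm, eq_div_iff h3, div_mul_eq_mul_div, div_eq_iff (by positivity)]
    rw [← hfacR]; ring
  rw [sum_congr rfl h, ← sum_div, key]
  exact div_self (by exact_mod_cast (Nat.factorial_pos n).ne')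

/-- For every real `z` with `|z| < 1`,
`₂F₁(−1/2, 3/4; −1/4; z) = (1+z)·(1−z)^{−1/2}`. -/
theorem stmt13 (z : ℝ) (hz : |z| < 1) :
    hyp2F1 (-(1/2)) (3/4) (-(1/4)) z = (1 + z) / Real.sqrt (1 - z) := by
  -- the binomial series
  set f : ℕ → ℝ := fun n => cc n * z ^ n with hf
  have hnorm : ∀ n, ‖f n‖ ≤ |z| ^ n := by
    intro n
    rw [hf]
    simp only [Real.norm_eq_abs, abs_mul, abs_pow]
    calc |cc n| * |z| ^ n ≤ 1 * |z| ^ n := by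
          apply mul_le_mul_of_nonneg_right _ (by positivity)
          rw [abs_of_pos (cc_pos n)]; exact cc_le_one n
      _ = |z| ^ n := one_mul _
  have hgeo : Summable (fun n : ℕ => |z| ^ n) :=
    summable_geometric_of_lt_one (abs_nonneg z) hz
  have hfs : Summable f := Summable.of_norm_bounded hgeo hnorm
  have hfnorm : Summable (fun n => ‖f n‖) := hgeo.of_nonneg_of_le (fun n => norm_nonneg _) hnorm
  set S : ℝ := ∑' n, f n with hSdef
  have hS : HasSum f S := hfs.hasSum
  -- S * S = (1 - z)⁻¹
  have hsq : S * S = (1 - z)⁻¹ := by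
    rw [hSdef, tsum_mul_tsum_eq_tsum_sum_antidiagonal_of_summable_norm hfnorm hfnorm]
    have : ∀ n : ℕ, ∑ ij ∈ antidiagonal n, f ij.1 * f ij.2 = z ^ n := by
      intro n
      have : ∀ ij ∈ antidiagonal n, f ij.1 * f ij.2 = (cc ij.1 * cc ij.2) * z ^ n := by
        intro ij hij
        have hmem : ij.1 + ij.2 = n := mem_antidiagonal.mp hij
        rw [hf]
        simp only
        rw [← hmem, pow_add]; ring
      rw [sum_congr rfl this, ← sum_mul, cc_conv, one_mul]
    rw [tsum_congr this, tsum_geometric_of_abs_lt_one hz]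
  -- positivity of S
  have habs1 : |z| < 1 := hz
  have hSpos : 0 < S := by
    have hpair : ∀ m : ℕ, 0 ≤ f (2*m+2) + f (2*m+3) := by
      intro m
      have he : z ^ (2*m+2) = |z| ^ (2*m+2) := by
        rw [← abs_pow, abs_of_nonneg]
        have : z ^ (2*m+2) = (z^(m+1))^2 := by ring
        rw [this]; positivity
      have ho : -(|z| ^ (2*m+3)) ≤ z ^ (2*m+3) := by
        rw [← abs_pow]; exact neg_abs_le _
      have hcc : cc (2*m+3) * |z| ^ (2*m+3) ≤ cc (2*m+2) * |z| ^ (2*m+2) := by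
        apply mul_le_mul (cc_antitone (2*m+2)) _ (by positivity) (cc_pos _).le
        calc |z| ^ (2*m+3) = |z| ^ (2*m+2) * |z| := by ring
          _ ≤ |z| ^ (2*m+2) * 1 := by
              apply mul_le_mul_of_nonneg_left hz.le (by positivity)
          _ = |z| ^ (2*m+2) := mul_one _
      have h1 : cc (2*m+3) * (-(|z| ^ (2*m+3))) ≤ cc (2*m+3) * z ^ (2*m+3) :=
        mul_le_mul_of_nonneg_left ho (cc_pos _).le
      rw [hf]
      simp only
      nlinarith [cc_pos (2*m+3), cc_pos (2*m+2)]
    have hlow : ∀ M : ℕ, 1 - |z|/2 ≤ ∑ i ∈ range (2*(M+1)), f i := by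
      intro M
      induction M with
      | zero =>
        have hc1 : cc 1 = 1/2 := by rw [cc_succ 0, cc_zero]; norm_num
        have h2 : ∑ i ∈ range 2, f i = 1 + (1/2) * z := by
          rw [Finset.sum_range_succ, Finset.sum_range_one]
          simp [hf, cc_zero, hc1]
        rw [show 2*(0+1) = 2 by rfl, h2]
        have := neg_abs_le z
        linarith
      | succ M ih =>
        have hstep : ∑ i ∈ range (2*(M+1+1)), f i
            = ∑ i ∈ range (2*(M+1)), f i + (f (2*M+2) + f (2*M+3)) := by
          have h2 : 2*(M+1+1) = (2*M+3)+1 := by ring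
          have h3 : 2*(M+1) = (2*M+2) := by ring
          rw [h2, Finset.sum_range_succ, Finset.sum_range_succ, h3]
          ring
        rw [hstep]
        linarith [hpair M]
    have h2M : Tendsto (fun M : ℕ => 2*(M+1)) atTop atTop := by
      apply tendsto_atTop_atTop_of_monotone
      · intro a b hab; show 2*(a+1) ≤ 2*(b+1); omega
      · intro b; exact ⟨b, by omega⟩
    have htend : Tendsto (fun M : ℕ => ∑ i ∈ range (2*(M+1)), f i) atTop (nhds S) :=
      hS.tendsto_sum_nat.comp h2M
    have : 1 - |z|/2 ≤ S := ge_of_tendsto' htend hlow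
    linarith
  -- identify S with (1-z)^{-1/2}
  have h1z : (0:ℝ) < 1 - z := by
    have := abs_lt.mp hz
    linarith [this.2]
  have hSval : S = (Real.sqrt (1 - z))⁻¹ := by
    have : S = Real.sqrt (S * S) := (Real.sqrt_mul_self hSpos.le).symm
    rw [this, hsq, ← Real.sqrt_inv]
  -- the hypergeometric series coefficient identity
  have hzS : HasSum (fun n : ℕ => if n = 0 then 0 else cc (n-1) * z ^ n) (z * S) := by
    set g : ℕ → ℝ := fun n => if n = 0 then 0 else cc (n-1) * z ^ n with hg
    have h1 : HasSum (fun n => g (n+1)) (z * S) := by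
      have heq : (fun n : ℕ => g (n+1)) = fun n => z * (cc n * z ^ n) := by
        funext n
        rw [hg]
        simp only [Nat.succ_ne_zero, if_false, Nat.add_sub_cancel]
        rw [pow_succ]; ring
      rw [heq]
      exact hS.mul_left z
    have h2 := (hasSum_nat_add_iff (f := g) 1).mp h1
    have h3 : z * S + ∑ i ∈ range 1, g i = z * S := by
      simp [hg]
    rwa [h3] at h2
  have hsum : HasSum (fun n : ℕ => f n + (if n = 0 then 0 else cc (n-1) * z ^ n))
      (S + z * S) := hS.add hzS
  -- coefficients of hyp2F1 equal f n + g n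
  have hcoeff : ∀ n : ℕ,
      ((ascPochhammer ℝ n).eval (-(1/2)) * (ascPochhammer ℝ n).eval (3/4) /
        ((ascPochhammer ℝ n).eval (-(1/4)) * (n.factorial : ℝ))) * z ^ n
      = f n + (if n = 0 then 0 else cc (n-1) * z ^ n) := by
    intro n
    cases n with
    | zero => simp [hf, cc_zero]
    | succ n =>
      have hA : (ascPochhammer ℝ (n+1)).eval (-(1/2))
          = -(1/2) * (ascPochhammer ℝ n).eval (1/2) := by
        rw [asc_succ_left_eval]; norm_num
      have hC : (ascPochhammer ℝ (n+1)).eval (-(1/4))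
          = -(1/4) * (ascPochhammer ℝ n).eval (3/4) := by
        rw [asc_succ_left_eval]; norm_num
      have hB : (ascPochhammer ℝ (n+1)).eval (3/4)
          = (ascPochhammer ℝ n).eval (3/4) * (3/4 + n) := ascPochhammer_succ_eval n _
      have hQ : (ascPochhammer ℝ (n+1)).eval (1/2)
          = (ascPochhammer ℝ n).eval (1/2) * (1/2 + n) := ascPochhammer_succ_eval n _
      have hPpos : 0 < (ascPochhammer ℝ n).eval (3/4) :=
        ascPochhammer_pos n _ (by norm_num)
      have hcoef : (ascPochhammer ℝ (n+1)).eval (-(1/2)) * (ascPochhammer ℝ (n+1)).eval (3/4) /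
          ((ascPochhammer ℝ (n+1)).eval (-(1/4)) * ((n+1).factorial : ℝ))
          = cc (n+1) + cc n := by
        rw [hA, hB, hC, cc, cc, hQ, Nat.factorial_succ, Nat.cast_mul]
        have hfacn : ((n.factorial : ℝ)) ≠ 0 := by
          exact_mod_cast (Nat.factorial_pos n).ne'
        have hn1 : ((n:ℝ)+1) ≠ 0 := by positivity
        field_simp
        push_cast
        ring
      rw [hf]
      simp only [Nat.succ_ne_zero, if_false, Nat.add_sub_cancel]
      rw [hcoef]
      ring
  -- conclude
  rw [hyp2F1, tsum_congr hcoeff, hsum.tsum_eq, hSval]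
  rw [div_eq_mul_inv]
  ring
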